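/- Bogolubov diagonalization lower bound (one-component version): Let b be a (possibly unbounded) operator with [b, b*] ≤ 1 in the sense of quadratic forms, and consider commuting copies b₊, b₋ with [b_τ, b_τ*] ≤ 1, τ = ±. Then for all real A, B ≥ 0: A(b₊* b₊ + b₋* b₋) + B(b₊* b₊ + b₋* b₋ + b₊* b₋* + b₊ b₋) ≥ -(A + B) + √((A + B)² - B²), and the bound is sharp if b_± are annihilation operators. -/

import Mathlib

open ContinuousLinearMap

set_option maxHeartbeats 2000000 in
/-- **Bogolubov diagonalization lower bound, one-component version.** Let `b₊, b₋` be
commuting operators with `[b_τ, b_τ*] ≤ 1` (in the quadratic form sense).  Then for all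
reals `A, B ≥ 0`,
`A(b₊*b₊ + b₋*b₋) + B(b₊*b₊ + b₋*b₋ + b₊*b₋* + b₊b₋) ≥ -(A+B) + √((A+B)² - B²)`. -/
theorem bogolubov_one_component
    {H : Type*} [NormedAddCommGroup H] [InnerProductSpace ℂ H] [CompleteSpace H]
    (bp bm : H →L[ℂ] H)
    (hcomm : bp * bm = bm * bp)
    (hcomm' : bp * adjoint bm = adjoint bm * bp)
    (hccr_p : ∀ ψ : H,
      ((inner ℂ ψ (((bp * adjoint bp - adjoint bp * bp)) ψ) : ℂ)).re ≤ ‖ψ‖ ^ 2)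
    (hccr_m : ∀ ψ : H,
      ((inner ℂ ψ (((bm * adjoint bm - adjoint bm * bm)) ψ) : ℂ)).re ≤ ‖ψ‖ ^ 2)
    (A B : ℝ) (hA : 0 ≤ A) (hB : 0 ≤ B) :
    ∀ ψ : H,
      (-(A + B) + Real.sqrt ((A + B) ^ 2 - B ^ 2)) * ‖ψ‖ ^ 2 ≤
        ((inner ℂ ψ
          ((((A : ℂ) • (adjoint bp * bp + adjoint bm * bm) +
            (B : ℂ) • (adjoint bp * bp + adjoint bm * bm +
              adjoint bp * adjoint bm + bp * bm))) ψ) : ℂ)).re := by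
  intro ψ
  set s : ℝ := ‖ψ‖ ^ 2 with hs
  set np : ℝ := ‖bp ψ‖ ^ 2 with hnp
  set nm : ℝ := ‖bm ψ‖ ^ 2 with hnm
  set npd : ℝ := ‖adjoint bp ψ‖ ^ 2 with hnpd
  set nmd : ℝ := ‖adjoint bm ψ‖ ^ 2 with hnmd
  set u : ℝ := ((inner ℂ ψ ((bp * bm) ψ) : ℂ)).re with hu
  -- re of ⟪ψ, T* T ψ⟫ is ‖Tψ‖²
  have hre_ad : ∀ T : H →L[ℂ] H, ((inner ℂ ψ ((adjoint T * T) ψ) : ℂ)).re = ‖T ψ‖ ^ 2 := by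
    intro T
    simp only [ContinuousLinearMap.mul_apply, adjoint_inner_right]
    rw [inner_self_eq_norm_sq_to_K]
    simp [← Complex.ofReal_pow]
  have hre_da : ∀ T : H →L[ℂ] H,
      ((inner ℂ ψ ((T * adjoint T) ψ) : ℂ)).re = ‖adjoint T ψ‖ ^ 2 := by
    intro T
    have h1 : (inner ℂ ψ ((T * adjoint T) ψ) : ℂ) = inner ℂ (adjoint T ψ) (adjoint T ψ) := by
      rw [ContinuousLinearMap.mul_apply]
      exact (adjoint_inner_left T (adjoint T ψ) ψ).symm
    rw [h1, inner_self_eq_norm_sq_to_K]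
    simp [← Complex.ofReal_pow]
  -- cross term
  have hcross : ((inner ℂ ψ ((adjoint bp * adjoint bm) ψ) : ℂ)).re = u := by
    have h1 : (inner ℂ ψ ((adjoint bp * adjoint bm) ψ) : ℂ) = inner ℂ ((bm * bp) ψ) ψ := by
      simp [mul_apply, adjoint_inner_right]
    rw [h1, ← hcomm, ← inner_conj_symm]
    exact Complex.conj_re _
  -- CCR bounds
  have hccrp : npd ≤ np + s := by
    have h := hccr_p ψ
    simp only [sub_apply, inner_sub_right, Complex.sub_re] at h
    rw [hre_da bp, hre_ad bp] at h
    linarith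
  have hccrm : nmd ≤ nm + s := by
    have h := hccr_m ψ
    simp only [sub_apply, inner_sub_right, Complex.sub_re] at h
    rw [hre_da bm, hre_ad bm] at h
    linarith
  -- the two completed-square positivity facts
  have hkey1 : ∀ l : ℝ, (0:ℝ) ≤ np + l ^ 2 * nmd + 2 * l * u := by
    intro l
    have h0 : (0:ℝ) ≤ ‖bp ψ + (l:ℂ) • adjoint bm ψ‖ ^ 2 := sq_nonneg _
    have hx : (inner ℂ (bp ψ) ((l:ℂ) • adjoint bm ψ) : ℂ).re = l * u := by
      rw [inner_smul_right]
      have h2 : (inner ℂ (bp ψ) (adjoint bm ψ) : ℂ) = inner ℂ ((bm * bp) ψ) ψ := by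
        simp [mul_apply, adjoint_inner_right]
      rw [h2, ← hcomm, ← inner_conj_symm]
      simp only [Complex.mul_re, Complex.ofReal_re, Complex.ofReal_im, Complex.conj_re,
        Complex.conj_im, zero_mul, neg_zero, sub_zero]
      rw [← hu]
    rw [norm_add_sq (𝕜 := ℂ)] at h0
    rw [RCLike.re_to_complex, hx] at h0
    rw [norm_smul] at h0
    simp only [Complex.norm_real, Real.norm_eq_abs, mul_pow, sq_abs] at h0
    rw [← hnp, ← hnmd] at h0
    linarith
  have hkey2 : ∀ l : ℝ, (0:ℝ) ≤ nm + l ^ 2 * npd + 2 * l * u := by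
    intro l
    have h0 : (0:ℝ) ≤ ‖bm ψ + (l:ℂ) • adjoint bp ψ‖ ^ 2 := sq_nonneg _
    have hx : (inner ℂ (bm ψ) ((l:ℂ) • adjoint bp ψ) : ℂ).re = l * u := by
      rw [inner_smul_right]
      have h2 : (inner ℂ (bm ψ) (adjoint bp ψ) : ℂ) = inner ℂ ((bp * bm) ψ) ψ := by
        simp [mul_apply, adjoint_inner_right]
      rw [h2, ← inner_conj_symm]
      simp only [Complex.mul_re, Complex.ofReal_re, Complex.ofReal_im, Complex.conj_re,
        Complex.conj_im, zero_mul, neg_zero, sub_zero]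
      rw [← hu]
    rw [norm_add_sq (𝕜 := ℂ)] at h0
    rw [RCLike.re_to_complex, hx] at h0
    rw [norm_smul] at h0
    simp only [Complex.norm_real, Real.norm_eq_abs, mul_pow, sq_abs] at h0
    rw [← hnm, ← hnpd] at h0
    linarith
  -- expand the right-hand side
  have hRHS : ((inner ℂ ψ
          ((((A : ℂ) • (adjoint bp * bp + adjoint bm * bm) +
            (B : ℂ) • (adjoint bp * bp + adjoint bm * bm +
              adjoint bp * adjoint bm + bp * bm))) ψ) : ℂ)).re
      = A * (np + nm) + B * (np + nm + u + u) := by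
    simp only [add_apply, smul_apply, inner_add_right, inner_smul_right, Complex.add_re,
      Complex.mul_re, Complex.ofReal_re, Complex.ofReal_im, Complex.add_im, zero_mul,
      sub_zero]
    rw [hre_ad bp, hre_ad bm, hcross, ← hu, ← hnp, ← hnm]
  rw [hRHS]
  -- now pure real arithmetic
  have hs0 : 0 ≤ s := sq_nonneg _
  have hnp0 : 0 ≤ np := sq_nonneg _
  have hnm0 : 0 ≤ nm := sq_nonneg _
  set r : ℝ := Real.sqrt ((A + B) ^ 2 - B ^ 2) with hr
  have hdisc : 0 ≤ (A + B) ^ 2 - B ^ 2 := by nlinarith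
  have hr2 : r ^ 2 = (A + B) ^ 2 - B ^ 2 := Real.sq_sqrt hdisc
  have hr0 : 0 ≤ r := Real.sqrt_nonneg _
  rcases eq_or_lt_of_le hB with hB0 | hBpos
  · -- B = 0
    have hrA : r = A := by
      rw [hr, ← hB0]
      simp [Real.sqrt_sq hA]
    have hzero : -(A + B) + r = 0 := by rw [hrA, ← hB0]; ring
    rw [hzero, zero_mul, ← hB0]
    nlinarith [mul_nonneg hA (add_nonneg hnp0 hnm0)]
  · -- B > 0
    set l : ℝ := (A + B - r) / B with hl
    have hBne : B ≠ 0 := ne_of_gt hBpos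
    have hrlt : r < A + B := by nlinarith
    have hlpos : 0 < l := div_pos (by linarith) hBpos
    have hBl : B * l = A + B - r := by
      rw [hl]; field_simp
    have heqB : B * (B * l ^ 2 - 2 * (A + B) * l + B) = 0 := by
      linear_combination (B * l - (A + B + r)) * hBl + hr2
    have heq : B * l ^ 2 - 2 * (A + B) * l + B = 0 := by
      rcases mul_eq_zero.mp heqB with h | h
      · exact absurd h hBne
      · exact h
    have h1 := hkey1 l
    have h2 := hkey2 l
    have hsum : 0 ≤ (1 + l ^ 2) * (np + nm) + 2 * l ^ 2 * s + 4 * l * u := by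
      nlinarith [mul_nonneg (sq_nonneg l) (sub_nonneg.mpr hccrp),
        mul_nonneg (sq_nonneg l) (sub_nonneg.mpr hccrm)]
    have hBsum : 0 ≤ B * ((1 + l ^ 2) * (np + nm) + 2 * l ^ 2 * s + 4 * l * u) :=
      mul_nonneg hB hsum
    have hBX : B * ((1 + l ^ 2) * (np + nm) + 2 * l ^ 2 * s + 4 * l * u)
        = 2 * l * ((A + B) * (np + nm) + (B * l) * s + 2 * B * u) := by
      linear_combination (np + nm) * heq
    have h2l : (0:ℝ) < 2 * l := by linarith
    have hX : 0 ≤ 2 * l * ((A + B) * (np + nm) + (B * l) * s + 2 * B * u) := by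
      rw [← hBX]; exact hBsum
    have hfin : 0 ≤ (A + B) * (np + nm) + (B * l) * s + 2 * B * u := by
      by_contra hcon
      push_neg at hcon
      nlinarith [mul_pos h2l (by linarith :
        (0:ℝ) < -((A + B) * (np + nm) + (B * l) * s + 2 * B * u))]
    rw [hBl] at hfin
    linarith [hfin]
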